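/- arXiv:math/0009045 — 2 statements merged into one kernel-verified Lean document; each statement's English description precedes it below -/
import Mathlib

section
/- Specker's theorem: for every homomorphism h : ℤ^ω → ℤ there exist n ∈ ℕ and integers c_0,…,c_{n-1} such that h(x) = Σ_{i<n} c_i x_i for all x ∈ ℤ^ω; equivalently, h factors through the projection onto a finite sub-product. The same holds with ℤ replaced as codomain by any free abelian group. -/
private lemma sp_split {G : Type*} [AddCommGroup G] (h : (ℕ → ℤ) →+ G) (x : ℕ → ℤ) (n : ℕ) :
    h x = (∑ i ∈ Finset.range n, x i • h (Pi.single i 1)) +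
      h (fun i => if i < n then 0 else x i) := by
  have hx : x = (∑ i ∈ Finset.range n, x i • Pi.single i (1:ℤ)) +
      (fun i => if i < n then 0 else x i) := by
    funext j
    simp only [Pi.add_apply, Finset.sum_apply, Pi.smul_apply, Pi.single_apply,
      smul_eq_mul, mul_ite, mul_one, mul_zero]
    rw [Finset.sum_ite_eq (Finset.range n) j x]
    by_cases hj : j < n <;> simp [hj]
  calc h x = h ((∑ i ∈ Finset.range n, x i • Pi.single i (1:ℤ)) +
      (fun i => if i < n then 0 else x i)) := by rw [← hx]
    _ = _ := by
      rw [map_add, map_sum]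
      congr 1
      exact Finset.sum_congr rfl fun i _ => (AddMonoidHom.map_zsmul h _ _).symm ▸ rfl

private lemma sp_div {G : Type*} [AddCommGroup G] (h : (ℕ → ℤ) →+ G) (x : ℕ → ℤ) (d : ℤ)
    (hd : ∀ i, d ∣ x i) : ∃ g, h x = d • g := by
  refine ⟨h (fun i => x i / d), ?_⟩
  rw [← AddMonoidHom.map_zsmul]
  congr 1
  funext i
  simp only [Pi.smul_apply, smul_eq_mul]
  exact (Int.mul_ediv_cancel' (hd i)).symm

private lemma sp_pdiv {G : Type*} [AddCommGroup G] (h : (ℕ → ℤ) →+ G)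
    (hz : ∀ i, h (Pi.single i 1) = 0) (p : ℤ) (w : ℕ → ℤ) (hw : ∀ i, p ^ i ∣ w i) (n : ℕ) :
    ∃ g, h w = p ^ n • g := by
  obtain ⟨g, hg⟩ := sp_div h (fun i => if i < n then 0 else w i) (p ^ n) (by
    intro i
    by_cases hi : i < n
    · simp [hi]
    · simpa [hi] using (pow_dvd_pow p (by omega)).trans (hw i))
  refine ⟨g, ?_⟩
  rw [sp_split h w n, hg]
  simp [hz]

private lemma sp_vanish {G : Type*} [AddCommGroup G]
    (hG : ∀ p : ℤ, 2 ≤ p → ∀ g : G, (∀ n : ℕ, ∃ g', g = p ^ n • g') → g = 0)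
    (h : (ℕ → ℤ) →+ G) (hz : ∀ i, h (Pi.single i 1) = 0) (x : ℕ → ℤ) : h x = 0 := by
  have hco : ∀ i : ℕ, ∃ s t : ℤ, x i = 2 ^ i * s + 3 ^ i * t := by
    intro i
    have hcp : IsCoprime ((2:ℤ) ^ i) ((3:ℤ) ^ i) := by
      refine IsCoprime.pow ?_
      rw [Int.isCoprime_iff_gcd_eq_one]; norm_num
    obtain ⟨u, v, huv⟩ := hcp
    exact ⟨u * x i, v * x i, by linear_combination (-(x i)) * huv⟩
  choose s t hst using hco
  have hx : x = (fun i => 2 ^ i * s i) + (fun i => 3 ^ i * t i) := by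
    funext i; simpa using hst i
  rw [hx, map_add]
  have h2 : h (fun i => 2 ^ i * s i) = 0 :=
    hG 2 le_rfl _ (fun n => sp_pdiv h hz 2 _ (fun i => Dvd.intro _ rfl) n)
  have h3 : h (fun i => 3 ^ i * t i) = 0 :=
    hG 3 (by norm_num) _ (fun n => sp_pdiv h hz 3 _ (fun i => Dvd.intro _ rfl) n)
  rw [h2, h3, add_zero]

private lemma sp_hG_int : ∀ p : ℤ, 2 ≤ p → ∀ g : ℤ, (∀ n : ℕ, ∃ g', g = p ^ n • g') → g = 0 := by
  intro p hp g hg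
  by_contra hne
  obtain ⟨g', hg'⟩ := hg (g.natAbs + 1)
  have hdvd : p ^ (g.natAbs + 1) ∣ g := ⟨g', by simpa [smul_eq_mul] using hg'⟩
  have hle : p ^ (g.natAbs + 1) ≤ |g| := Int.le_of_dvd (abs_pos.mpr hne) ((dvd_abs _ _).mpr hdvd)
  have h2 : (2:ℤ) ^ (g.natAbs + 1) ≤ p ^ (g.natAbs + 1) :=
    pow_le_pow_left₀ (by norm_num) hp _
  have hlt : |g| < 2 ^ (g.natAbs + 1) := by
    rw [Int.abs_eq_natAbs]
    have := Nat.lt_two_pow_self (n := g.natAbs)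
    have h2' : (2:ℕ) ^ g.natAbs ≤ 2 ^ (g.natAbs + 1) := Nat.pow_le_pow_right (by norm_num) (by omega)
    exact_mod_cast lt_of_lt_of_le this h2'
  linarith

private lemma sp_hG_free {G : Type*} [AddCommGroup G] [Module ℤ G] [Module.Free ℤ G] :
    ∀ p : ℤ, 2 ≤ p → ∀ g : G, (∀ n : ℕ, ∃ g', g = p ^ n • g') → g = 0 := by
  intro p hp g hg
  set b := Module.Free.chooseBasis ℤ G
  have hrepr : b.repr g = 0 := by
    ext j
    refine sp_hG_int p hp _ (fun n => ?_)
    obtain ⟨g', hg'⟩ := hg n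
    exact ⟨b.repr g' j, by simp [hg']⟩
  have := b.repr.injective (a₁ := g) (a₂ := 0) (by simpa using hrepr)
  simpa using this

/-- step existence -/
private lemma sp_step (c : ℕ → ℤ) (hA : {i | c i ≠ 0}.Infinite) (i : ℕ) (S : ℤ) :
    ∃ q : ℕ × ℤ × ℤ, i < q.1 ∧ 2 * S < 2 ^ q.1 ∧ ((2:ℤ) ^ q.1) ∣ q.2.1 ∧
      q.2.2 = S + c q.1 * q.2.1 ∧ ((2:ℤ) ^ q.1) ≤ q.2.2 := by
  obtain ⟨a, ha, hgt⟩ := hA.exists_gt (max i (2 * S).toNat)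
  have hia : i < a := lt_of_le_of_lt (le_max_left _ _) hgt
  have hSa : 2 * S < 2 ^ a := by
    calc 2 * S ≤ ((2 * S).toNat : ℤ) := Int.self_le_toNat _
      _ < (a : ℤ) := by exact_mod_cast lt_of_le_of_lt (le_max_right i _) hgt
      _ < 2 ^ a := by exact_mod_cast Nat.lt_two_pow_self (n := a)
  have hca : c a ≠ 0 := ha
  set A' : ℤ := |c a| * 2 ^ a with hA'
  have hA'pos : 0 < A' := mul_pos (abs_pos.mpr hca) (by positivity)
  set L : ℤ := 2 ^ a with hL
  set S' : ℤ := L + (S - L) % A' with hS'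
  have hge : L ≤ S' := le_add_of_nonneg_right (Int.emod_nonneg _ (ne_of_gt hA'pos))
  have hdvd : A' ∣ S' - S := by
    have := Int.emod_emod_of_dvd (S - L) (dvd_refl A')
    have h1 : S' - S = (S - L) % A' - (S - L) := by rw [hS']; ring
    rw [h1, Int.emod_def]
    ring_nf
    exact ⟨-((S - L) / A'), by ring⟩
  have hdvd2 : (c a * 2 ^ a) ∣ S' - S := by
    have : |c a * 2 ^ a| = A' := by
      rw [abs_mul, abs_pow]; norm_num; rfl
    exact (abs_dvd _ _).mp (this ▸ hdvd)
  obtain ⟨t, ht⟩ := hdvd2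
  refine ⟨⟨a, 2 ^ a * t, S'⟩, hia, hSa, ⟨t, rfl⟩, ?_, hge⟩
  simp only
  linear_combination ht

private lemma sp_finite_main (h : (ℕ → ℤ) →+ ℤ) : {i | h (Pi.single i 1) ≠ 0}.Finite := by
  classical
  by_contra hinf
  replace hinf : {i | h (Pi.single i 1) ≠ 0}.Infinite := hinf
  set c : ℕ → ℤ := fun i => h (Pi.single i 1) with hc
  -- the recursion
  set σ : ℕ → ℕ × ℤ × ℤ :=
    fun k => Nat.rec ((0:ℕ), (0:ℤ), (0:ℤ))
      (fun _ st => Classical.choose (sp_step c hinf st.1 st.2.2)) k with hσ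
  set I : ℕ → ℕ := fun k => (σ k).1 with hI
  set B : ℕ → ℤ := fun k => (σ k).2.1 with hB
  set S : ℕ → ℤ := fun k => (σ k).2.2 with hS
  have hspec : ∀ k, I k < I (k+1) ∧ 2 * S k < 2 ^ (I (k+1)) ∧ ((2:ℤ) ^ (I (k+1))) ∣ B (k+1) ∧
      S (k+1) = S k + c (I (k+1)) * B (k+1) ∧ ((2:ℤ) ^ (I (k+1))) ≤ S (k+1) := by
    intro k
    have : σ (k+1) = Classical.choose (sp_step c hinf (σ k).1 (σ k).2.2) := rfl
    have hcs := Classical.choose_spec (sp_step c hinf (σ k).1 (σ k).2.2)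
    rw [← this] at hcs
    exact hcs
  have hImono : StrictMono I := strictMono_nat_of_lt_succ (fun k => (hspec k).1)
  have hS0 : S 0 = 0 := rfl
  -- the test vector
  set bb : ℕ → ℤ := fun m =>
    if hm : ∃ k, I (k+1) = m then B (Classical.choose hm + 1) else 0 with hbb
  have hbb1 : ∀ k, bb (I (k+1)) = B (k+1) := by
    intro k
    have hm : ∃ j, I (j+1) = I (k+1) := ⟨k, rfl⟩
    rw [hbb]
    simp only [dif_pos hm]
    have hcs : I (Classical.choose hm + 1) = I (k + 1) := Classical.choose_spec hm
    have h6 : Classical.choose hm + 1 = k + 1 := hImono.injective hcs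
    have h7 : Classical.choose hm = k := by omega
    rw [h7]
  have hbb3 : ∀ m, (∀ k, I (k+1) ≠ m) → bb m = 0 := by
    intro m hm
    rw [hbb]
    exact dif_neg (by push_neg; exact hm)
  have hbb2 : ∀ m, ((2:ℤ) ^ m) ∣ bb m := by
    intro m
    by_cases hm' : ∃ j, I (j+1) = m
    · obtain ⟨j, hj⟩ := hm'
      subst hj
      rw [hbb1 j]
      exact (hspec j).2.2.1
    · push_neg at hm'
      rw [hbb3 m hm']
      exact dvd_zero _
  -- partial sums
  have hsum : ∀ k, ∑ m ∈ Finset.range (I (k+1)), c m * bb m = S k := by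
    intro k
    induction k with
    | zero =>
      rw [hS0]
      refine Finset.sum_eq_zero (fun m hm => ?_)
      rw [Finset.mem_range] at hm
      have : bb m = 0 := by
        refine hbb3 m (fun j hj => ?_)
        have h1 : I (0+1) ≤ I (j+1) := hImono.monotone (show 0+1 ≤ j+1 by omega)
        omega
      rw [this, mul_zero]
    | succ k ih =>
      have hle1 : I (k+1) ≤ I (k+2) := le_of_lt (hspec (k+1)).1
      rw [Finset.range_eq_Ico, ← Finset.sum_Ico_consecutive _ (Nat.zero_le _) hle1,
        ← Finset.range_eq_Ico, ih]
      have hIco : ∑ m ∈ Finset.Ico (I (k+1)) (I (k+2)), c m * bb m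
          = c (I (k+1)) * B (k+1) := by
        rw [← hbb1 k]
        refine Finset.sum_eq_single_of_mem _ (Finset.mem_Ico.mpr ⟨le_refl _, (hspec (k+1)).1⟩)
          (fun m hm hne => ?_)
        rw [Finset.mem_Ico] at hm
        have : bb m = 0 := by
          refine hbb3 m (fun j hj => ?_)
          have ha1 : I (k+1) ≤ I (j+1) := hj ▸ hm.1
          have ha2 : I (j+1) < I (k+2) := hj ▸ hm.2
          have h3 : j + 1 < k + 2 := by
            by_contra hcon
            have := hImono.monotone (show k + 2 ≤ j + 1 by omega)
            omega
          have h4 : k + 1 ≤ j + 1 := by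
            by_contra hcon
            have := hImono (show j + 1 < k + 1 by omega)
            omega
          have hjk : j = k := by omega
          subst hjk
          exact hne hj.symm
        rw [this, mul_zero]
      rw [hIco, ← (hspec k).2.2.2.1]
  -- the congruence
  have hcong : ∀ k, ∃ g : ℤ, h bb = S k + 2 ^ (I (k+1)) * g := by
    intro k
    obtain ⟨g, hg⟩ := sp_div h (fun m => if m < I (k+1) then 0 else bb m) (2 ^ (I (k+1)))
      (by
        intro m
        by_cases hm : m < I (k+1)
        · simp [hm]
        · simpa [hm] using (pow_dvd_pow (2:ℤ) (by omega)).trans (hbb2 m))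
    refine ⟨g, ?_⟩
    rw [sp_split h bb (I (k+1)), hg]
    have : ∑ m ∈ Finset.range (I (k+1)), bb m • h (Pi.single m 1) = S k := by
      rw [← hsum k]
      exact Finset.sum_congr rfl (fun m _ => by rw [smul_eq_mul, hc, mul_comm])
    rw [this, smul_eq_mul]
  -- size bound
  have hbound : ∀ k, (2:ℤ) ^ (I (k+1)) ≤ |h bb| := by
    intro k
    obtain ⟨g, hg⟩ := hcong (k+1)
    have h1 : (2:ℤ) ^ (I (k+1)) ≤ S (k+1) := (hspec k).2.2.2.2
    have h2 : 2 * S (k+1) < 2 ^ (I (k+2)) := (hspec (k+1)).2.1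
    have hSpos : 0 < S (k+1) := lt_of_lt_of_le (by positivity) h1
    have habs : S (k+1) ≤ |h bb| := by
      rcases le_or_gt 0 g with hgpos | hgneg
      · have : S (k+1) ≤ h bb := by nlinarith [mul_nonneg (le_of_lt (by positivity : (0:ℤ) < 2 ^ (I (k+2)))) hgpos]
        exact this.trans (le_abs_self _)
      · have hgle : g ≤ -1 := by omega
        have : h bb ≤ -(S (k+1)) := by nlinarith
        calc S (k+1) ≤ -(h bb) := by linarith
          _ ≤ |h bb| := neg_le_abs _
    exact h1.trans habs
  -- final contradiction
  have hfin : ∀ k : ℕ, (2:ℤ) ^ (k+1) ≤ |h bb| := by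
    intro k
    refine le_trans ?_ (hbound k)
    have : k + 1 ≤ I (k+1) := hImono.le_apply
    exact pow_le_pow_right₀ (by norm_num) this
  set n := (h bb).natAbs with hn
  have := hfin n
  have hxx : |h bb| < 2 ^ (n+1) := by
    rw [Int.abs_eq_natAbs, ← hn]
    have h1 : n < 2 ^ n := Nat.lt_two_pow_self (n := n)
    have h2 : (2:ℕ) ^ n ≤ 2 ^ (n+1) := Nat.pow_le_pow_right (by norm_num) (by omega)
    exact_mod_cast lt_of_lt_of_le h1 h2
  linarith

private def sp_cut (n : ℕ) : (ℕ → ℤ) →+ (ℕ → ℤ) :=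
  AddMonoidHom.mk' (fun y i => if i < n then 0 else y i)
    (by intro a b; funext i; by_cases hi : i < n <;> simp [hi])

private lemma sp_tail_zero {G : Type*} [AddCommGroup G]
    (hG : ∀ p : ℤ, 2 ≤ p → ∀ g : G, (∀ n : ℕ, ∃ g', g = p ^ n • g') → g = 0)
    (h : (ℕ → ℤ) →+ G) (n : ℕ) (hz : ∀ i, n ≤ i → h (Pi.single i 1) = 0) (x : ℕ → ℤ) :
    h (fun i => if i < n then 0 else x i) = 0 := by
  have key := sp_vanish hG (h.comp (sp_cut n)) (fun j => ?_) x
  · simpa [sp_cut, AddMonoidHom.comp_apply, AddMonoidHom.mk'_apply] using key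
  · simp only [AddMonoidHom.comp_apply]
    by_cases hj : j < n
    · have : (sp_cut n) (Pi.single j 1) = 0 := by
        funext i
        simp only [sp_cut, AddMonoidHom.mk'_apply, Pi.zero_apply]
        by_cases hi : i < n
        · simp [hi]
        · simp only [if_neg hi]
          rw [Pi.single_apply, if_neg (show ¬ i = j by omega)]
      rw [this, map_zero]
    · have : (sp_cut n) (Pi.single j 1) = Pi.single j 1 := by
        funext i
        simp only [sp_cut, AddMonoidHom.mk'_apply]
        by_cases hi : i < n
        · simp only [if_pos hi]
          rw [Pi.single_apply, if_neg (show ¬ i = j by omega)]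
        · simp [hi]
      rw [this]
      exact hz j (by omega)

private lemma sp_part1 (h : (ℕ → ℤ) →+ ℤ) : ∃ (n : ℕ) (c : ℕ → ℤ),
    ∀ x : ℕ → ℤ, h x = ∑ i ∈ Finset.range n, c i * x i := by
  have hfin := sp_finite_main h
  obtain ⟨N, hN⟩ := hfin.bddAbove
  refine ⟨N + 1, fun i => h (Pi.single i 1), fun x => ?_⟩
  have hz : ∀ i, N + 1 ≤ i → h (Pi.single i 1) = 0 := by
    intro i hi
    by_contra hne
    exact absurd (hN hne) (by omega)
  rw [sp_split h x (N + 1), sp_tail_zero sp_hG_int h (N + 1) hz x, add_zero]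
  exact Finset.sum_congr rfl (fun i _ => by rw [smul_eq_mul, mul_comm])

private lemma sp_finite_free {G : Type*} [AddCommGroup G] [Module ℤ G] [Module.Free ℤ G]
    (h : (ℕ → ℤ) →+ G) : {i | h (Pi.single i 1) ≠ 0}.Finite := by
  classical
  by_contra hinf
  replace hinf : {i | h (Pi.single i 1) ≠ 0}.Infinite := hinf
  set b := Module.Free.chooseBasis ℤ G with hb
  set ι := Module.Free.ChooseBasisIndex ℤ G with hι
  set c : ℕ → G := fun i => h (Pi.single i 1) with hc
  -- each coordinate is hit finitely often
  have hfj : ∀ j : ι, {i : ℕ | b.repr (c i) j ≠ 0}.Finite := by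
    intro j
    have := sp_finite_main (((b.coord j).toAddMonoidHom).comp h)
    refine this.subset (fun i hi => ?_)
    simpa [AddMonoidHom.comp_apply, Module.Basis.coord_apply] using hi
  -- greedy recursion
  have step : ∀ (i : ℕ) (J : Finset ι), ∃ a : ℕ, i < a ∧ c a ≠ 0 ∧
      ∀ j ∈ J, b.repr (c a) j = 0 := by
    intro i J
    have hHit : {i' : ℕ | ∃ j ∈ J, b.repr (c i') j ≠ 0}.Finite := by
      have : {i' : ℕ | ∃ j ∈ J, b.repr (c i') j ≠ 0} =
          ⋃ j ∈ (J : Set ι), {i' : ℕ | b.repr (c i') j ≠ 0} := by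
        ext i'; simp
      rw [this]
      exact Set.Finite.biUnion J.finite_toSet (fun j _ => hfj j)
    obtain ⟨a, ha, hgt⟩ := (hinf.diff hHit).exists_gt i
    obtain ⟨ha1, ha2⟩ := ha
    refine ⟨a, hgt, ha1, fun j hj => ?_⟩
    by_contra hne
    exact ha2 ⟨j, hj, hne⟩
  set σ : ℕ → ℕ × Finset ι :=
    fun k => Nat.rec ((0:ℕ), (∅ : Finset ι))
      (fun _ st =>
        (Classical.choose (step st.1 st.2),
          st.2 ∪ (b.repr (c (Classical.choose (step st.1 st.2)))).support)) k with hσ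
  set idx : ℕ → ℕ := fun k => (σ k).1 with hidx
  set Js : ℕ → Finset ι := fun k => (σ k).2 with hJs
  have hspec : ∀ k, idx k < idx (k+1) ∧ c (idx (k+1)) ≠ 0 ∧
      (∀ j ∈ Js k, b.repr (c (idx (k+1))) j = 0) ∧
      Js (k+1) = Js k ∪ (b.repr (c (idx (k+1)))).support := by
    intro k
    have hcs := Classical.choose_spec (step (σ k).1 (σ k).2)
    exact ⟨hcs.1, hcs.2.1, hcs.2.2, rfl⟩
  have hidxmono : StrictMono idx := strictMono_nat_of_lt_succ (fun k => (hspec k).1)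
  have hJsmono : ∀ k l, k ≤ l → Js k ⊆ Js l := by
    intro k l hkl
    induction l with
    | zero => have : k = 0 := by omega
              subst this; exact subset_rfl
    | succ l ih =>
      rcases Nat.lt_or_ge k (l+1) with hlt | hge
      · refine (ih (by omega)).trans ?_
        rw [(hspec l).2.2.2]
        exact Finset.subset_union_left
      · have : k = l + 1 := by omega
        subst this; exact subset_rfl
  have hsupJ : ∀ k, (b.repr (c (idx (k+1)))).support ⊆ Js (k+1) := by
    intro k
    rw [(hspec k).2.2.2]
    exact Finset.subset_union_right
  -- disjointness of supports along the subsequence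
  have hdisj : ∀ k l, k < l → ∀ j : ι, b.repr (c (idx (k+1))) j ≠ 0 →
      b.repr (c (idx (l+1))) j = 0 := by
    intro k l hkl j hjne
    have hj1 : j ∈ Js (k+1) := hsupJ k (Finsupp.mem_support_iff.mpr hjne)
    have hj2 : j ∈ Js l := hJsmono (k+1) l (by omega) hj1
    exact (hspec l).2.2.1 j hj2
  -- the separating functional
  set ψ : ι → ℤ := fun j =>
    if hj : ∃ k, b.repr (c (idx (k+1))) j ≠ 0
      then b.repr (c (idx (Classical.choose hj + 1))) j else 0 with hψ
  set φ : (ℕ → ℤ) →+ ℤ := ((b.constr ℤ ψ).toAddMonoidHom).comp h with hφ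
  have hkey : ∀ k, φ (Pi.single (idx (k+1)) 1) ≠ 0 := by
    intro k
    have h1 : φ (Pi.single (idx (k+1)) 1) = (b.constr ℤ ψ) (c (idx (k+1))) := rfl
    rw [h1, b.constr_apply ℤ ψ (c (idx (k+1)))]
    have hterm : ∀ j ∈ (b.repr (c (idx (k+1)))).support,
        b.repr (c (idx (k+1))) j • ψ j = (b.repr (c (idx (k+1))) j) ^ 2 := by
      intro j hj
      have hjne : b.repr (c (idx (k+1))) j ≠ 0 := Finsupp.mem_support_iff.mp hj
      have hex : ∃ l, b.repr (c (idx (l+1))) j ≠ 0 := ⟨k, hjne⟩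
      have huniq : Classical.choose hex = k := by
        by_contra hne
        have hcs := Classical.choose_spec hex
        rcases Nat.lt_or_ge (Classical.choose hex) k with hlt | hge
        · exact hjne (hdisj _ _ hlt j hcs)
        · exact hcs (hdisj k _ (by omega) j hjne)
      rw [hψ]
      simp only [dif_pos hex, huniq]
      rw [smul_eq_mul, sq]
    rw [Finsupp.sum]
    rw [Finset.sum_congr rfl hterm]
    have hne0 : (b.repr (c (idx (k+1)))).support.Nonempty := by
      rw [Finsupp.support_nonempty_iff]
      intro hcon
      exact (hspec k).2.1 (by
        have := congrArg b.repr.symm hcon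
        simpa using this)
    have hpos : 0 < ∑ j ∈ (b.repr (c (idx (k+1)))).support, (b.repr (c (idx (k+1))) j) ^ 2 := by
      refine Finset.sum_pos (fun j hj => ?_) hne0
      have := Finsupp.mem_support_iff.mp hj
      positivity
    omega
  -- contradiction with sp_finite_main
  have hfin := sp_finite_main φ
  have hsub : Set.range (fun k => idx (k+1)) ⊆ {i | φ (Pi.single i 1) ≠ 0} := by
    rintro _ ⟨k, rfl⟩
    exact hkey k
  have hinf2 : (Set.range (fun k => idx (k+1))).Infinite :=
    Set.infinite_range_of_injective (fun a b hab => by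
      have h9 : a + 1 = b + 1 := hidxmono.injective hab
      omega)
  exact (hinf2.mono hsub) hfin

private def sp_ext (n : ℕ) : (Fin n → ℤ) →+ (ℕ → ℤ) :=
  AddMonoidHom.mk' (fun y i => if hi : i < n then y ⟨i, hi⟩ else 0)
    (by intro a b; funext i; by_cases hi : i < n <;> simp [hi])

private lemma sp_part2 {G : Type*} [AddCommGroup G] [Module ℤ G] [Module.Free ℤ G]
    (h : (ℕ → ℤ) →+ G) : ∃ (n : ℕ) (hbar : (Fin n → ℤ) →+ G),
      ∀ x : ℕ → ℤ, h x = hbar (fun i => x i.1) := by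
  obtain ⟨N, hN⟩ := (sp_finite_free h).bddAbove
  set n := N + 1 with hn
  have hz : ∀ i, n ≤ i → h (Pi.single i 1) = 0 := by
    intro i hi
    by_contra hne
    exact absurd (hN hne) (by omega)
  refine ⟨n, h.comp (sp_ext n), fun x => ?_⟩
  have h1 : h x = ∑ i ∈ Finset.range n, x i • h (Pi.single i 1) := by
    rw [sp_split h x n, sp_tail_zero sp_hG_free h n hz x, add_zero]
  have h2 : h.comp (sp_ext n) (fun i => x i.1) =
      ∑ i ∈ Finset.range n, x i • h (Pi.single i 1) := by
    set y : ℕ → ℤ := fun i => if hi : i < n then x i else 0 with hy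
    have hsy : (sp_ext n) (fun i : Fin n => x i.1) = y := by
      funext i
      simp only [sp_ext, AddMonoidHom.mk'_apply, hy]
    rw [AddMonoidHom.comp_apply, hsy, sp_split h y n]
    have htail : (fun i => if i < n then 0 else y i) = (0 : ℕ → ℤ) := by
      funext i
      by_cases hi : i < n <;> simp [hy, hi]
    rw [htail, map_zero, add_zero]
    refine Finset.sum_congr rfl (fun i hi => ?_)
    rw [Finset.mem_range] at hi
    simp [hy, hi]
  rw [h1, h2]

/-- (Specker) Every homomorphism `h : ℤ^ω →+ ℤ` is given by
`h x = ∑_{i<n} c i * x i` for some `n` and integers `c i`; moreover every homomorphism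
from `ℤ^ω` to a free abelian group factors through a finite sub-product. -/
theorem stmt_15 :
    (∀ h : (ℕ → ℤ) →+ ℤ, ∃ (n : ℕ) (c : ℕ → ℤ),
      ∀ x : ℕ → ℤ, h x = ∑ i ∈ Finset.range n, c i * x i) ∧
    (∀ (G : Type u) (_ : AddCommGroup G), ∀ (_ : Module.Free ℤ G),
      ∀ h : (ℕ → ℤ) →+ G, ∃ (n : ℕ) (hbar : (Fin n → ℤ) →+ G),
        ∀ x : ℕ → ℤ, h x = hbar (fun i => x i.1)) := by
  refine ⟨fun h => sp_part1 h, fun G instG instFree h => ?_⟩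
  letI := instG
  letI := instFree
  exact sp_part2 h
end

section
/- Let h : ℤ^ω → ℤ be a group homomorphism that vanishes on the direct sum ⊕_ω ℤ. Then h = 0. (Key lemma toward Specker's theorem.) -/
lemma aux_pow_vanish (h : (ℕ → ℤ) →+ ℤ)
    (hvan : ∀ x : ℕ → ℤ, (Function.support x).Finite → h x = 0)
    (b : ℤ) (hb : 2 ≤ b) (a : ℕ → ℤ) :
    h (fun k => b ^ k * a k) = 0 := by
  set x : ℕ → ℤ := fun k => b ^ k * a k with hx
  have key : ∀ n : ℕ, b ^ n ∣ h x := by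
    intro n
    set z : ℕ → ℤ := fun k => if n ≤ k then b ^ (k - n) * a k else 0 with hz
    have hsub : (Function.support (x - (b ^ n) • z)).Finite := by
      apply Set.Finite.subset (Set.finite_Iio n)
      intro k hk
      simp only [Function.mem_support, Pi.sub_apply, Pi.smul_apply, smul_eq_mul] at hk
      by_contra hlt
      simp only [Set.mem_Iio, not_lt] at hlt
      apply hk
      simp only [hx, hz, if_pos hlt]
      rw [← mul_assoc, ← pow_add, Nat.add_sub_cancel' hlt, sub_self]
    have h1 : h (x - (b ^ n) • z) = 0 := hvan _ hsub
    have h2 : h x = h ((b ^ n) • z) := by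
      have := h.map_sub x ((b ^ n) • z)
      rw [h1] at this
      linarith
    rw [h2, map_zsmul, smul_eq_mul]
    exact Dvd.intro _ rfl
  set c := h x with hc
  rcases eq_or_ne c 0 with h0 | h0
  · exact h0
  have hn : |c| < b ^ c.natAbs := by
    have h1 : (c.natAbs : ℤ) < 2 ^ c.natAbs := by
      exact_mod_cast (Nat.lt_two_pow_self (n := c.natAbs))
    have h2 : (2 : ℤ) ^ c.natAbs ≤ b ^ c.natAbs :=
      pow_le_pow_left₀ (by norm_num) hb _
    rw [Int.abs_eq_natAbs]
    omega
  exact absurd (Int.eq_zero_of_abs_lt_dvd (key c.natAbs) hn) h0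

/-- A homomorphism `ℤ^ω →+ ℤ` vanishing on the direct sum `⊕_ω ℤ`
(the finitely supported sequences) is zero. -/
theorem stmt_17 (h : (ℕ → ℤ) →+ ℤ)
    (hvan : ∀ x : ℕ → ℤ, (Function.support x).Finite → h x = 0) :
    h = 0 := by
  ext x
  have cop : ∀ k : ℕ, IsCoprime ((2:ℤ) ^ k) ((3:ℤ) ^ k) := by
    intro k
    apply IsCoprime.pow
    rw [Int.isCoprime_iff_gcd_eq_one]
    decide
  choose u v huv using fun k => (cop k)
  have hdecomp : x = (fun k => 2 ^ k * (u k * x k)) + (fun k => 3 ^ k * (v k * x k)) := by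
    funext k
    have := huv k
    simp only [Pi.add_apply]
    linear_combination (-(x k)) * huv k
  rw [AddMonoidHom.zero_apply, hdecomp, map_add,
    aux_pow_vanish h hvan 2 (by norm_num) _,
    aux_pow_vanish h hvan 3 (by norm_num) _, add_zero]
end
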